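/- Define row vectors x_i^+ = (q_i^o)^T [I - x_{i+1}(q_{i+1}^o)^T] ··· [I - x_p(q_p^o)^T]. Then x_i^+ x_i = 1 and x_i^+ x_j = 0 for all j ≠ i. -/

import Mathlib

open Matrix

/-- Simplified (non-normalized) Gram–Schmidt process. -/
noncomputable def gs {n p : ℕ} (x : Fin p → Fin n → ℝ) (i : Fin p) : Fin n → ℝ :=
  x i - ∑ j : Fin p, if h : j < i then ((gs x j ⬝ᵥ x i) / (gs x j ⬝ᵥ gs x j)) • gs x j else 0
termination_by i.1
decreasing_by exact h

/-- Product of the projection-style factors `[I - x_k (q_k^o)ᵀ]` over indices `k > i`,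
taken in increasing index order. -/
noncomputable def Pprod {n p : ℕ} (x : Fin p → Fin n → ℝ) (i : Fin p) :
    Matrix (Fin n) (Fin n) ℝ :=
  (((List.finRange p).filter (fun k => i < k)).map
    (fun k => (1 : Matrix (Fin n) (Fin n) ℝ) -
      vecMulVec (x k) ((gs x k ⬝ᵥ gs x k)⁻¹ • gs x k))).prod

def toE {n : ℕ} (v : Fin n → ℝ) : EuclideanSpace ℝ (Fin n) := WithLp.toLp 2 v
def ofE {n : ℕ} (v : EuclideanSpace ℝ (Fin n)) : Fin n → ℝ := WithLp.ofLp v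

lemma ofE_sub {n : ℕ} (a b : EuclideanSpace ℝ (Fin n)) : ofE (a - b) = ofE a - ofE b := by simp [ofE]
lemma ofE_sum {n p : ℕ} (s : Finset (Fin p)) (f : Fin p → EuclideanSpace ℝ (Fin n)) :
    ofE (∑ j ∈ s, f j) = ∑ j ∈ s, ofE (f j) := by simp [ofE]
lemma ofE_smul {n : ℕ} (c : ℝ) (v : EuclideanSpace ℝ (Fin n)) : ofE (c • v) = c • ofE v := by simp [ofE]
lemma ofE_toE {n : ℕ} (v : Fin n → ℝ) : ofE (toE v) = v := by simp [ofE, toE]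

lemma inner_toE {n : ℕ} (v w : EuclideanSpace ℝ (Fin n)) :
    (inner ℝ v w : ℝ) = ofE v ⬝ᵥ ofE w := by
  simp [PiLp.inner_apply, RCLike.inner_apply, dotProduct, ofE, mul_comm]

noncomputable def q' {n p : ℕ} (x : Fin p → Fin n → ℝ) : Fin p → EuclideanSpace ℝ (Fin n) :=
  @InnerProductSpace.gramSchmidt ℝ (EuclideanSpace ℝ (Fin n)) _ _ _ (Fin p) _ _
    (inferInstance : WellFoundedLT (Fin p)) (fun j => toE (x j))

lemma q'_def {n p : ℕ} (x : Fin p → Fin n → ℝ) (i : Fin p) :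
    q' x i = toE (x i) - ∑ j ∈ Finset.Iio i,
      ((ℝ ∙ q' x j).starProjection (toE (x i)) : EuclideanSpace ℝ (Fin n)) := by
  unfold q'
  exact @InnerProductSpace.gramSchmidt_def ℝ (EuclideanSpace ℝ (Fin n)) _ _ _ (Fin p) _ _
    (inferInstance : WellFoundedLT (Fin p)) (fun j => toE (x j)) i

lemma q'_def' {n p : ℕ} (x : Fin p → Fin n → ℝ) (i : Fin p) :
    toE (x i) = q' x i + ∑ j ∈ Finset.Iio i,
      ((ℝ ∙ q' x j).starProjection (toE (x i)) : EuclideanSpace ℝ (Fin n)) := by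
  rw [q'_def, sub_add_cancel]

lemma q'_orth {n p : ℕ} (x : Fin p → Fin n → ℝ) {i j : Fin p} (h : i ≠ j) :
    (inner ℝ (q' x i) (q' x j) : ℝ) = 0 :=
  @InnerProductSpace.gramSchmidt_orthogonal ℝ (EuclideanSpace ℝ (Fin n)) _ _ _ (Fin p) _ _
    (inferInstance : WellFoundedLT (Fin p)) (fun j => toE (x j)) i j h

lemma q'_tri {n p : ℕ} (x : Fin p → Fin n → ℝ) {j k : Fin p} (h : j < k) :
    (inner ℝ (q' x k) (toE (x j)) : ℝ) = 0 :=
  @InnerProductSpace.gramSchmidt_inv_triangular ℝ (EuclideanSpace ℝ (Fin n)) _ _ _ (Fin p) _ _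
    (inferInstance : WellFoundedLT (Fin p)) (fun j => toE (x j)) j k h

lemma q'_ne_zero {n p : ℕ} {x : Fin p → Fin n → ℝ} (hli : LinearIndependent ℝ x) (k : Fin p) :
    q' x k ≠ 0 :=
  @InnerProductSpace.gramSchmidt_ne_zero ℝ (EuclideanSpace ℝ (Fin n)) _ _ _ (Fin p) _ _
    (inferInstance : WellFoundedLT (Fin p)) (fun j => toE (x j)) k
    (hli.map' (WithLp.linearEquiv 2 ℝ (Fin n → ℝ)).symm.toLinearMap (LinearEquiv.ker _))

/-- `gs` agrees with mathlib's `gramSchmidt`. -/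
lemma gs_eq_gramSchmidt {n p : ℕ} (x : Fin p → Fin n → ℝ) (i : Fin p) :
    gs x i = ofE (q' x i) := by
  have H : ∀ m : ℕ, ∀ i : Fin p, (i : ℕ) < m → gs x i = ofE (q' x i) := by
    intro m
    induction m with
    | zero => exact fun i h => absurd h (Nat.not_lt_zero _)
    | succ m ihm =>
      intro i him
      have ih : ∀ j : Fin p, j < i → gs x j = ofE (q' x j) :=
        fun j hj => ihm j (lt_of_lt_of_le hj (Nat.lt_succ_iff.mp him))
      rw [gs, q'_def, ofE_sub, ofE_sum, ofE_toE]
      congr 1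
      have hdite : ∀ j : Fin p,
          (if h : j < i then ((gs x j ⬝ᵥ x i) / (gs x j ⬝ᵥ gs x j)) • gs x j else 0)
          = (if j < i then ((gs x j ⬝ᵥ x i) / (gs x j ⬝ᵥ gs x j)) • gs x j else 0) := by
        intro j; split <;> simp
      rw [Finset.sum_congr rfl (fun j _ => hdite j), ← Finset.sum_filter]
      have hfil : Finset.filter (fun j => j < i) Finset.univ = Finset.Iio i := by
        ext j; simp
      rw [hfil]
      refine Finset.sum_congr rfl ?_
      intro j hj
      have hji : j < i := Finset.mem_Iio.mp hj
      rw [Submodule.starProjection_singleton, ofE_smul]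
      have h1 : (‖q' x j‖ : ℝ) ^ 2 = gs x j ⬝ᵥ gs x j := by
        rw [← real_inner_self_eq_norm_sq, inner_toE, ← ih j hji]
      have h2 : (inner ℝ (q' x j) (toE (x i)) : ℝ) = gs x j ⬝ᵥ x i := by
        rw [inner_toE, ← ih j hji, ofE_toE]
      rw [h1, h2, ← ih j hji]
      norm_cast
  exact H (i + 1) i (Nat.lt_succ_self _)

lemma gs_dot_self_ne_zero {n p : ℕ} {x : Fin p → Fin n → ℝ}
    (hli : LinearIndependent ℝ x) (k : Fin p) : gs x k ⬝ᵥ gs x k ≠ 0 := by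
  rw [gs_eq_gramSchmidt, ← inner_toE, inner_self_ne_zero]
  exact q'_ne_zero hli k

lemma gs_dot_x_lt {n p : ℕ} (x : Fin p → Fin n → ℝ) {j k : Fin p} (h : j < k) :
    gs x k ⬝ᵥ x j = 0 := by
  rw [gs_eq_gramSchmidt]
  show ofE (q' x k) ⬝ᵥ ofE (toE (x j)) = 0
  rw [← inner_toE]
  exact q'_tri x h

lemma gs_dot_x_self {n p : ℕ} (x : Fin p → Fin n → ℝ) (k : Fin p) :
    gs x k ⬝ᵥ x k = gs x k ⬝ᵥ gs x k := by
  rw [gs_eq_gramSchmidt]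
  show ofE (q' x k) ⬝ᵥ ofE (toE (x k)) = ofE (q' x k) ⬝ᵥ ofE (q' x k)
  rw [← inner_toE, ← inner_toE]
  calc (inner ℝ (q' x k) (toE (x k)) : ℝ)
      = inner ℝ (q' x k) (q' x k + ∑ j ∈ Finset.Iio k,
          ((ℝ ∙ q' x j).starProjection (toE (x k)) : EuclideanSpace ℝ (Fin n))) := by
        rw [← q'_def']
    _ = (inner ℝ (q' x k) (q' x k) : ℝ) := by
        rw [inner_add_right, inner_sum]
        have : ∀ j ∈ Finset.Iio k,
            (inner ℝ (q' x k)
              (((ℝ ∙ q' x j).starProjection (toE (x k)) : EuclideanSpace ℝ (Fin n))) : ℝ)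
            = 0 := by
          intro j hj
          have hjk : j < k := Finset.mem_Iio.mp hj
          rw [Submodule.starProjection_singleton, inner_smul_right, q'_orth x hjk.ne', mul_zero]
        rw [Finset.sum_congr rfl this, Finset.sum_const_zero, add_zero]

lemma vecMul_vecMulVec' {n : ℕ} (v a b : Fin n → ℝ) :
    Matrix.vecMul v (vecMulVec a b) = (v ⬝ᵥ a) • b := by
  funext j
  simp [Matrix.vecMul, vecMulVec, dotProduct, Finset.sum_mul, mul_assoc]

lemma aux_list {n p : ℕ} (x : Fin p → Fin n → ℝ)
    (hQnz : ∀ k, gs x k ⬝ᵥ gs x k ≠ 0)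
    (hlt : ∀ j k : Fin p, j < k → gs x k ⬝ᵥ x j = 0)
    (hself : ∀ k, gs x k ⬝ᵥ x k = gs x k ⬝ᵥ gs x k)
    (i : Fin p) :
    ∀ (l : List (Fin p)) (v : Fin n → ℝ),
      l.Pairwise (· < ·) →
      i ∉ l →
      (∀ j : Fin p, j ∉ l → ∀ k ∈ l, j < k) →
      (∀ j : Fin p, j ∉ l → v ⬝ᵥ x j = if j = i then 1 else 0) →
      ∀ j : Fin p,
        (Matrix.vecMul v ((l.map (fun k => (1 : Matrix (Fin n) (Fin n) ℝ) -
          vecMulVec (x k) ((gs x k ⬝ᵥ gs x k)⁻¹ • gs x k))).prod)) ⬝ᵥ x j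
          = if j = i then 1 else 0 := by
  intro l
  induction l with
  | nil =>
    intro v _ _ _ hv j
    simpa [Matrix.vecMul_one] using hv j (List.not_mem_nil)
  | cons k t ih =>
    intro v hpw hi hout hv j
    have hpw' := (List.pairwise_cons.mp hpw).2
    have hhead := (List.pairwise_cons.mp hpw).1
    have hik : i ≠ k := fun h => hi (h ▸ List.mem_cons_self)
    have hit : i ∉ t := fun h => hi (List.mem_cons_of_mem _ h)
    rw [List.map_cons, List.prod_cons, ← Matrix.vecMul_vecMul]
    set c : ℝ := (gs x k ⬝ᵥ gs x k)⁻¹ with hc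
    have hv' : Matrix.vecMul v ((1 : Matrix (Fin n) (Fin n) ℝ) -
        vecMulVec (x k) (c • gs x k)) = v - (v ⬝ᵥ x k) • (c • gs x k) := by
      rw [Matrix.vecMul_sub, Matrix.vecMul_one, vecMul_vecMulVec']
    rw [hv']
    apply ih _ hpw' hit
    · intro j' hj' k' hk'
      by_cases hjk : j' = k
      · exact hjk ▸ hhead k' hk'
      · have : j' ∉ k :: t := by
          simp only [List.mem_cons, not_or]; exact ⟨hjk, hj'⟩
        exact hout j' this k' (List.mem_cons_of_mem _ hk')
    · intro j' hj'
      rw [sub_dotProduct, smul_dotProduct, smul_dotProduct, smul_eq_mul, smul_eq_mul]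
      by_cases hjk : j' = k
      · subst hjk
        rw [hself j', hc, inv_mul_cancel₀ (hQnz j'), mul_one, sub_self]
        rw [if_neg (fun h => hik h.symm)]
      · have hnl : j' ∉ k :: t := by
          simp only [List.mem_cons, not_or]; exact ⟨hjk, hj'⟩
        have hjlt : j' < k := hout j' hnl k (List.mem_cons_self)
        rw [hlt j' k hjlt, mul_zero, mul_zero, sub_zero]
        exact hv j' hnl

theorem xplus_biorthogonal {n p : ℕ} (x : Fin p → Fin n → ℝ)
    (hli : LinearIndependent ℝ x)
    (xplus : Fin p → Fin n → ℝ)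
    (hxp : xplus = fun i => Matrix.vecMul ((gs x i ⬝ᵥ gs x i)⁻¹ • gs x i) (Pprod x i))
    (i : Fin p) :
    xplus i ⬝ᵥ x i = 1 ∧ ∀ j : Fin p, j ≠ i → xplus i ⬝ᵥ x j = 0 := by
  have hQnz : ∀ k, gs x k ⬝ᵥ gs x k ≠ 0 := gs_dot_self_ne_zero hli
  have hlt : ∀ j k : Fin p, j < k → gs x k ⬝ᵥ x j = 0 := fun j k h => gs_dot_x_lt x h
  have hself : ∀ k, gs x k ⬝ᵥ x k = gs x k ⬝ᵥ gs x k := gs_dot_x_self x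
  set l : List (Fin p) := (List.finRange p).filter (fun k => i < k) with hl
  have hmem : ∀ j : Fin p, j ∈ l ↔ i < j := by
    intro j
    simp [hl, List.mem_filter, List.mem_finRange]
  have key : ∀ j : Fin p, xplus i ⬝ᵥ x j = if j = i then 1 else 0 := by
    intro j
    rw [hxp]
    simp only
    rw [Pprod]
    apply aux_list x hQnz hlt hself i l
    · exact (List.pairwise_lt_finRange p).filter _
    · intro h
      exact absurd ((hmem i).mp h) (lt_irrefl i)
    · intro j' hj' k hk
      have h1 : ¬ i < j' := fun h => hj' ((hmem j').mpr h)
      exact lt_of_le_of_lt (le_of_not_gt h1) ((hmem k).mp hk)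
    · intro j' hj'
      have h1 : ¬ i < j' := fun h => hj' ((hmem j').mpr h)
      rw [smul_dotProduct, smul_eq_mul]
      by_cases hji : j' = i
      · subst hji
        rw [if_pos rfl, hself j', inv_mul_cancel₀ (hQnz j')]
      · have : j' < i := lt_of_le_of_ne (le_of_not_gt h1) hji
        rw [if_neg hji, hlt j' i this, mul_zero]
  exact ⟨by rw [key i, if_pos rfl], fun j hj => by rw [key j, if_neg hj]⟩
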